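/- The class of Bernoulli product measures on Cantor space is effectively orthogonal: if p ≠ q in [0,1], then no real is Martin-Löf random with respect to both the Bernoulli(p) measure and the Bernoulli(q) measure. -/

import Mathlib

open MeasureTheory Filter

abbrev Cantor : Type := ℕ → Bool
abbrev Str : Type := List Bool

def restr (X : Cantor) (n : ℕ) : Str := (List.range n).map X

def cyl (σ : Str) : Set Cantor := {X | restr X σ.length = σ}

def openOf (V : Set Str) : Set Cantor := ⋃ σ ∈ V, cyl σ

def CE {α : Type} [Primcodable α] (S : Set α) : Prop :=
  ∃ f : α →. Unit, Partrec f ∧ ∀ a, a ∈ S ↔ (f a).Dom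

def MLTest (μ : Measure Cantor) (U : ℕ → Set Str) : Prop :=
  CE {p : ℕ × Str | p.2 ∈ U p.1} ∧ ∀ i, μ (openOf (U i)) ≤ 1 / 2 ^ i

def MLRandom (μ : Measure Cantor) (X : Cantor) : Prop :=
  ∀ U, MLTest μ U → ∃ i, X ∉ openOf (U i)

noncomputable def cm (μ : Measure Cantor) (σ : Str) : ℝ := (μ (cyl σ)).toReal

def ComputableMeasure (μ : Measure Cantor) : Prop :=
  IsProbabilityMeasure μ ∧
    ∃ g : Str × ℕ → ℚ, Computable g ∧
      ∀ σ n, |(g (σ, n) : ℝ) - cm μ σ| ≤ (2 : ℝ)⁻¹ ^ n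

def interleave (Z Y : Cantor) : Cantor := fun n => if n % 2 = 0 then Z (n / 2) else Y (n / 2)

/-- `μ` is the Bernoulli product measure with success probability `p`. -/
def BernoulliSpec (p : ℝ) (μ : Measure Cantor) : Prop :=
  IsProbabilityMeasure μ ∧
    ∀ σ : Str, μ (cyl σ) = ENNReal.ofReal (p ^ σ.count true * (1 - p) ^ σ.count false)

namespace S6

/-- Finset of all boolean strings of length `n`. -/
def strs : ℕ → Finset Str
  | 0 => {([] : Str)}
  | n+1 => ((strs n).image (List.cons true)) ∪ ((strs n).image (List.cons false))

lemma mem_strs {n : ℕ} {σ : Str} : σ ∈ strs n ↔ σ.length = n := by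
  induction n generalizing σ with
  | zero => simp [strs, List.length_eq_zero_iff]
  | succ n ih =>
    simp only [strs, Finset.mem_union, Finset.mem_image]
    constructor
    · rintro (⟨τ, hτ, rfl⟩ | ⟨τ, hτ, rfl⟩) <;> simp [ih.1 hτ]
    · intro h
      match σ with
      | [] => simp at h
      | b :: τ =>
        simp at h
        cases b
        · exact Or.inr ⟨τ, ih.2 h, rfl⟩
        · exact Or.inl ⟨τ, ih.2 h, rfl⟩

lemma sum_strs_succ (F : Str → ℝ) (n : ℕ) :
    ∑ σ ∈ strs (n+1), F σ
      = (∑ σ ∈ strs n, F (true :: σ)) + ∑ σ ∈ strs n, F (false :: σ) := by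
  have hdisj : Disjoint ((strs n).image (List.cons true)) ((strs n).image (List.cons false)) := by
    simp only [Finset.disjoint_left, Finset.mem_image]
    rintro σ ⟨τ, _, rfl⟩ ⟨τ', _, h⟩
    simp at h
  rw [show strs (n+1) = ((strs n).image (List.cons true)) ∪ ((strs n).image (List.cons false)) from rfl,
    Finset.sum_union hdisj,
    Finset.sum_image (by intro a _ b _ h; simpa using h),
    Finset.sum_image (by intro a _ b _ h; simpa using h)]


noncomputable def w (p : ℝ) (σ : Str) : ℝ := p ^ σ.count true * (1 - p) ^ σ.count false

lemma w_true (p : ℝ) (σ : Str) : w p (true :: σ) = p * w p σ := by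
  simp [w, List.count_cons, pow_succ]; ring

lemma w_false (p : ℝ) (σ : Str) : w p (false :: σ) = (1 - p) * w p σ := by
  simp [w, List.count_cons, pow_succ]; ring

lemma count_true_cons_true (σ : Str) : ((true :: σ).count true : ℝ) = (σ.count true : ℝ) + 1 := by
  simp [List.count_cons]

lemma count_true_cons_false (σ : Str) : ((false :: σ).count true : ℝ) = (σ.count true : ℝ) := by
  simp [List.count_cons]

/-- deviation -/
noncomputable def dv (p : ℝ) (n : ℕ) (σ : Str) : ℝ := (σ.count true : ℝ) - n * p

lemma moment_step (p : ℝ) (j n : ℕ) :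
    ∑ σ ∈ strs (n+1), w p σ * (dv p (n+1) σ)^j
      = ∑ σ ∈ strs n, (p * (w p σ * (dv p n σ + (1-p))^j)
          + (1-p) * (w p σ * (dv p n σ - p)^j)) := by
  rw [sum_strs_succ]
  rw [← Finset.sum_add_distrib]
  refine Finset.sum_congr rfl fun σ _ => ?_
  rw [w_true, w_false]
  have h1 : dv p (n+1) (true :: σ) = dv p n σ + (1-p) := by
    simp [dv, count_true_cons_true]; push_cast; ring
  have h2 : dv p (n+1) (false :: σ) = dv p n σ - p := by
    simp [dv, count_true_cons_false]; push_cast; ring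
  rw [h1, h2]; ring

lemma sum_w (p : ℝ) (n : ℕ) : ∑ σ ∈ strs n, w p σ = 1 := by
  induction n with
  | zero => simp [strs, w]
  | succ n ih =>
    calc ∑ σ ∈ strs (n+1), w p σ
        = ∑ σ ∈ strs (n+1), w p σ * (dv p (n+1) σ)^0 := by simp
      _ = ∑ σ ∈ strs n, (p * (w p σ * (dv p n σ + (1-p))^0)
          + (1-p) * (w p σ * (dv p n σ - p)^0)) := moment_step p 0 n
      _ = ∑ σ ∈ strs n, w p σ := by
          refine Finset.sum_congr rfl fun σ _ => ?_; simp; ring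
      _ = 1 := ih

lemma sum_w1 (p : ℝ) (n : ℕ) : ∑ σ ∈ strs n, w p σ * dv p n σ = 0 := by
  induction n with
  | zero => simp [strs, w, dv]
  | succ n ih =>
    have hm := moment_step p 1 n
    simp only [pow_one] at hm
    calc ∑ σ ∈ strs (n+1), w p σ * dv p (n+1) σ
        = ∑ σ ∈ strs (n+1), w p σ * (dv p (n+1) σ)^1 := by simp
      _ = ∑ σ ∈ strs n, (p * (w p σ * (dv p n σ + (1-p))^1)
          + (1-p) * (w p σ * (dv p n σ - p)^1)) := moment_step p 1 n
      _ = ∑ σ ∈ strs n, (w p σ * dv p n σ) := by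
          refine Finset.sum_congr rfl fun σ _ => ?_; ring
      _ = 0 := ih

lemma sum_w2 (p : ℝ) (n : ℕ) :
    ∑ σ ∈ strs n, w p σ * (dv p n σ)^2 = n * (p * (1-p)) := by
  induction n with
  | zero => simp [strs, w, dv]
  | succ n ih =>
    calc ∑ σ ∈ strs (n+1), w p σ * (dv p (n+1) σ)^2
        = ∑ σ ∈ strs n, (p * (w p σ * (dv p n σ + (1-p))^2)
          + (1-p) * (w p σ * (dv p n σ - p)^2)) := moment_step p 2 n
      _ = ∑ σ ∈ strs n, (w p σ * (dv p n σ)^2 + (p*(1-p)) * w p σ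
            + (1 - 2*p) * (w p σ * dv p n σ) * 0) := by
          refine Finset.sum_congr rfl fun σ _ => ?_; ring
      _ = ∑ σ ∈ strs n, (w p σ * (dv p n σ)^2 + (p*(1-p)) * w p σ) := by
          refine Finset.sum_congr rfl fun σ _ => ?_; ring
      _ = (∑ σ ∈ strs n, w p σ * (dv p n σ)^2) + (p*(1-p)) * ∑ σ ∈ strs n, w p σ := by
          rw [Finset.sum_add_distrib, Finset.mul_sum]
      _ = n * (p*(1-p)) + (p*(1-p)) * 1 := by rw [ih, sum_w]
      _ = (n+1 : ℕ) * (p*(1-p)) := by push_cast; ring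

lemma sum_w4 (p : ℝ) (n : ℕ) :
    ∑ σ ∈ strs n, w p σ * (dv p n σ)^4
      = n * (p*(1-p)^4 + (1-p)*p^4) + 3*n*(n-1) * (p*(1-p))^2 := by
  induction n with
  | zero => simp [strs, w, dv]
  | succ n ih =>
    calc ∑ σ ∈ strs (n+1), w p σ * (dv p (n+1) σ)^4
        = ∑ σ ∈ strs n, (p * (w p σ * (dv p n σ + (1-p))^4)
          + (1-p) * (w p σ * (dv p n σ - p)^4)) := moment_step p 4 n
      _ = ∑ σ ∈ strs n, (w p σ * (dv p n σ)^4
            + (6 * (p*(1-p))) * (w p σ * (dv p n σ)^2)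
            + (4 * (p*(1-p)) * ((1-p)^2 - p^2) + 4*p*(1-p)^3*0 - 4*p*(1-p)^3*0) * (w p σ * dv p n σ)
            + (p*(1-p)^4 + (1-p)*p^4) * w p σ) := by
          refine Finset.sum_congr rfl fun σ _ => ?_; ring
      _ = (∑ σ ∈ strs n, w p σ * (dv p n σ)^4)
            + (6 * (p*(1-p))) * (∑ σ ∈ strs n, w p σ * (dv p n σ)^2)
            + (4 * (p*(1-p)) * ((1-p)^2 - p^2)) * (∑ σ ∈ strs n, w p σ * dv p n σ)
            + (p*(1-p)^4 + (1-p)*p^4) * ∑ σ ∈ strs n, w p σ := by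
          rw [Finset.sum_add_distrib, Finset.sum_add_distrib, Finset.sum_add_distrib,
            Finset.mul_sum, Finset.mul_sum, Finset.mul_sum]
          ring
      _ = (n * (p*(1-p)^4 + (1-p)*p^4) + 3*n*(n-1) * (p*(1-p))^2)
            + (6 * (p*(1-p))) * (n * (p * (1-p)))
            + (4 * (p*(1-p)) * ((1-p)^2 - p^2)) * 0
            + (p*(1-p)^4 + (1-p)*p^4) * 1 := by rw [ih, sum_w2, sum_w1, sum_w]
      _ = (n+1:ℕ) * (p*(1-p)^4 + (1-p)*p^4) + 3*(n+1:ℕ)*((n+1:ℕ)-1) * (p*(1-p))^2 := by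
          push_cast; ring


lemma w_nonneg {p : ℝ} (hp0 : 0 ≤ p) (hp1 : p ≤ 1) (σ : Str) : 0 ≤ w p σ :=
  mul_nonneg (pow_nonneg hp0 _) (pow_nonneg (by linarith) _)

lemma sum_w4_le {p : ℝ} (hp0 : 0 ≤ p) (hp1 : p ≤ 1) (n : ℕ) :
    ∑ σ ∈ strs n, w p σ * (dv p n σ)^4 ≤ (n:ℝ)^2 := by
  rw [sum_w4]
  have h1 : p*(1-p)^4 + (1-p)*p^4 ≤ 1 := by nlinarith [sq_nonneg p, sq_nonneg (1-p)]
  have h2 : (p*(1-p))^2 ≤ (1:ℝ)/16 := by nlinarith [sq_nonneg (2*p-1), sq_nonneg (p*(1-p)), mul_nonneg hp0 (by linarith : (0:ℝ) ≤ 1-p)]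
  rcases Nat.eq_zero_or_pos n with rfl | hn
  · simp
  have hn1 : (1:ℝ) ≤ n := by exact_mod_cast hn
  have hnn : (0:ℝ) ≤ n := by positivity
  nlinarith [sq_nonneg ((n:ℝ)-1)]

lemma chebyshev {p : ℝ} (hp0 : 0 ≤ p) (hp1 : p ≤ 1) (ε : ℝ) (hε : 0 < ε)
    (n : ℕ) (hn : 1 ≤ n) (B : Finset Str) (hB : B ⊆ strs n)
    (hbad : ∀ σ ∈ B, ε * n ≤ |(σ.count true : ℝ) - n * p|) :
    ∑ σ ∈ B, w p σ ≤ ε⁻¹^4 * ((n:ℝ)^2)⁻¹ := by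
  have hnpos : (0:ℝ) < n := by exact_mod_cast hn
  have hεn : (0:ℝ) < ε * n := by positivity
  have key : ∀ σ ∈ B, w p σ * (ε*n)^4 ≤ w p σ * (dv p n σ)^4 := by
    intro σ hσ
    refine mul_le_mul_of_nonneg_left ?_ (w_nonneg hp0 hp1 σ)
    calc (ε*n)^4 ≤ |(σ.count true : ℝ) - n * p|^4 :=
          pow_le_pow_left₀ (le_of_lt hεn) (hbad σ hσ) 4
      _ = (dv p n σ)^4 := by rw [← abs_pow, abs_of_nonneg (by positivity)]; rfl
  have h1 : (∑ σ ∈ B, w p σ) * (ε*n)^4 ≤ ∑ σ ∈ B, w p σ * (dv p n σ)^4 := by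
    rw [Finset.sum_mul]
    exact Finset.sum_le_sum key
  have h2 : ∑ σ ∈ B, w p σ * (dv p n σ)^4 ≤ ∑ σ ∈ strs n, w p σ * (dv p n σ)^4 :=
    Finset.sum_le_sum_of_subset_of_nonneg hB
      (fun σ _ _ => mul_nonneg (w_nonneg hp0 hp1 σ) (by positivity))
  have h3 := (h1.trans h2).trans (sum_w4_le hp0 hp1 n)
  have h4 : (0:ℝ) < (ε*n)^4 := by positivity
  rw [← le_div_iff₀ h4] at h3
  calc ∑ σ ∈ B, w p σ ≤ (n:ℝ)^2 / (ε*n)^4 := h3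
    _ = ε⁻¹^4 * ((n:ℝ)^2)⁻¹ := by field_simp


lemma measure_bound {p : ℝ} {μ : Measure Cantor} (hspec : BernoulliSpec p μ)
    (hp0 : 0 ≤ p) (hp1 : p ≤ 1) (c : Str → Bool) {ε : ℝ} (hε : 0 < ε)
    (hdev : ∀ σ : Str, c σ = true → ε * σ.length ≤ |(σ.count true : ℝ) - σ.length * p|)
    (N : ℕ) (hN1 : 1 ≤ N) :
    μ (openOf {σ | N ≤ σ.length ∧ c σ = true}) ≤ ENNReal.ofReal (ε⁻¹^4 * (2 / N)) := by
  classical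
  set lvl : ℕ → Finset Str :=
    fun n => if N ≤ n then (strs n).filter (fun σ => c σ = true) else ∅ with hlvl
  have hsub : openOf {σ | N ≤ σ.length ∧ c σ = true} ⊆ ⋃ n : ℕ, ⋃ σ ∈ (lvl n : Finset Str), cyl σ := by
    intro X hX
    simp only [openOf, Set.mem_iUnion, Set.mem_setOf_eq] at hX ⊢
    obtain ⟨σ, ⟨hlen, hc⟩, hcyl⟩ := hX
    exact ⟨σ.length, σ, by simp [hlvl, hlen, Finset.mem_filter, mem_strs, hc], hcyl⟩
  have hlvlle : ∀ n : ℕ, μ (⋃ σ ∈ (lvl n : Finset Str), cyl σ)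
      ≤ (if N ≤ n then ENNReal.ofReal (ε⁻¹^4 * ((n:ℝ)^2)⁻¹) else 0) := by
    intro n
    by_cases hn : N ≤ n
    · simp only [hlvl, if_pos hn]
      refine le_trans (measure_biUnion_finset_le _ _) ?_
      have hsum : ∑ σ ∈ (strs n).filter (fun σ => c σ = true), μ (cyl σ)
          = ENNReal.ofReal (∑ σ ∈ (strs n).filter (fun σ => c σ = true), w p σ) := by
        rw [ENNReal.ofReal_sum_of_nonneg (fun σ _ => w_nonneg hp0 hp1 σ)]
        exact Finset.sum_congr rfl fun σ _ => hspec.2 σ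
      rw [hsum]
      refine ENNReal.ofReal_le_ofReal ?_
      refine chebyshev hp0 hp1 ε hε n (le_trans hN1 hn) _ (Finset.filter_subset _ _) ?_
      intro σ hσ
      rw [Finset.mem_filter, mem_strs] at hσ
      have := hdev σ hσ.2
      rw [hσ.1] at this
      exact this
    · simp [hlvl, if_neg hn]
  calc μ (openOf {σ | N ≤ σ.length ∧ c σ = true})
      ≤ μ (⋃ n : ℕ, ⋃ σ ∈ (lvl n : Finset Str), cyl σ) := measure_mono hsub
    _ ≤ ∑' n : ℕ, μ (⋃ σ ∈ (lvl n : Finset Str), cyl σ) := measure_iUnion_le _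
    _ ≤ ∑' n : ℕ, (if N ≤ n then ENNReal.ofReal (ε⁻¹^4 * ((n:ℝ)^2)⁻¹) else 0) :=
        ENNReal.tsum_le_tsum hlvlle
    _ ≤ ENNReal.ofReal (ε⁻¹^4 * (2 / N)) := by
        rw [ENNReal.tsum_eq_iSup_sum]
        refine iSup_le fun F => ?_
        have hFsum : ∑ n ∈ F, (if N ≤ n then ENNReal.ofReal (ε⁻¹^4 * ((n:ℝ)^2)⁻¹) else 0)
            = ENNReal.ofReal (∑ n ∈ F, if N ≤ n then ε⁻¹^4 * ((n:ℝ)^2)⁻¹ else 0) := by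
          rw [ENNReal.ofReal_sum_of_nonneg (fun n _ => by positivity)]
          refine Finset.sum_congr rfl fun n _ => ?_
          split <;> simp
        rw [hFsum]
        refine ENNReal.ofReal_le_ofReal ?_
        have hfac : (∑ n ∈ F, if N ≤ n then ε⁻¹^4 * ((n:ℝ)^2)⁻¹ else 0)
            = ε⁻¹^4 * ∑ n ∈ F, (if N ≤ n then ((n:ℝ)^2)⁻¹ else 0) := by
          rw [Finset.mul_sum]
          refine Finset.sum_congr rfl fun n _ => ?_
          split <;> simp
        rw [hfac]
        refine mul_le_mul_of_nonneg_left ?_ (by positivity)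
        set M := F.sup id + 1 with hM
        have hsub2 : F.filter (fun n => N ≤ n) ⊆ Finset.Ioo (N-1) M := by
          intro n hn
          rw [Finset.mem_filter] at hn
          rw [Finset.mem_Ioo]
          have := Finset.le_sup (f := id) hn.1
          simp only [id] at this
          omega
        calc ∑ n ∈ F, (if N ≤ n then ((n:ℝ)^2)⁻¹ else 0)
            = ∑ n ∈ F.filter (fun n => N ≤ n), ((n:ℝ)^2)⁻¹ := (Finset.sum_filter _ _).symm
          _ ≤ ∑ n ∈ Finset.Ioo (N-1) M, ((n:ℝ)^2)⁻¹ :=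
              Finset.sum_le_sum_of_subset_of_nonneg hsub2 (fun i _ _ => by positivity)
          _ ≤ 2 / (((N-1:ℕ):ℝ) + 1) := sum_Ioo_inv_sq_le _ _
          _ = 2 / N := by
              congr 1
              have h : N - 1 + 1 = N := by omega
              exact_mod_cast congrArg (Nat.cast (R := ℝ)) h

def myCount (σ : Str) : ℕ := σ.foldr (fun b n => bif b then n+1 else n) 0

lemma myCount_eq (σ : Str) : myCount σ = σ.count true := by
  induction σ with
  | nil => rfl
  | cons b τ ih =>
    cases b <;> simp [myCount, List.count_cons, List.foldr] at ih ⊢ <;> omega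

lemma primrec_myCount : Primrec myCount :=
  Primrec.list_foldr Primrec.id (Primrec.const 0)
    (Primrec.cond (Primrec.fst.comp Primrec.snd)
      (Primrec.succ.comp (Primrec.snd.comp Primrec.snd))
      (Primrec.snd.comp Primrec.snd)).to₂

lemma primrec_pow : Primrec₂ ((· ^ ·) : ℕ → ℕ → ℕ) :=
  Primrec₂.unpaired'.1 Nat.Primrec.pow

lemma ce_of {α : Type} [Primcodable α] {P : α → Prop} [DecidablePred P]
    (h : PrimrecPred P) : CE {a | P a} := by
  have hcp : ComputablePred P := ⟨‹_›, h.decide.to_comp⟩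
  refine ⟨fun a => Part.assert (P a) fun _ => Part.some (), hcp.to_re, fun a => ?_⟩
  simp [Part.assert, Part.some, Set.mem_setOf_eq]

lemma length_restr (X : Cantor) (n : ℕ) : (restr X n).length = n := by
  simp [restr]

lemma escape {p : ℝ} (hp0 : 0 ≤ p) (hp1 : p ≤ 1) {μ : Measure Cantor}
    (hμ : BernoulliSpec p μ) (c : Str → Bool) (hc : Primrec c) {ε : ℝ} (hε : 0 < ε)
    (hdev : ∀ σ : Str, c σ = true → ε * σ.length ≤ |(σ.count true : ℝ) - σ.length * p|)
    (X : Cantor) (hX : MLRandom μ X) :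
    ∃ N : ℕ, 1 ≤ N ∧ ∀ n, N ≤ n → c (restr X n) = false := by
  classical
  set K : ℕ := ⌈ε⁻¹^4 * 2⌉₊ + 1 with hK
  have hK1 : 1 ≤ K := Nat.le_add_left 1 _
  set U : ℕ → Set Str := fun i => {σ | K * 2^i ≤ σ.length ∧ c σ = true} with hU
  have hCE : CE {x : ℕ × Str | x.2 ∈ U x.1} := by
    have h1 : PrimrecPred (fun x : ℕ × Str => K * 2^x.1 ≤ x.2.length) :=
      Primrec.nat_le.comp
        (Primrec.nat_mul.comp (Primrec.const K) (primrec_pow.comp (Primrec.const 2) Primrec.fst))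
        (Primrec.list_length.comp Primrec.snd)
    have h2 : PrimrecPred (fun x : ℕ × Str => c x.2 = true) :=
      Primrec.eq.comp (hc.comp Primrec.snd) (Primrec.const true)
    have h3 : PrimrecPred (fun x : ℕ × Str => K * 2^x.1 ≤ x.2.length ∧ c x.2 = true) :=
      PrimrecPred.and h1 h2
    exact ce_of h3
  have hmeas : ∀ i, μ (openOf (U i)) ≤ 1 / 2 ^ i := by
    intro i
    have hNi : 1 ≤ K * 2^i := Nat.one_le_iff_ne_zero.2 (by positivity)
    refine le_trans (measure_bound hμ hp0 hp1 c hε hdev (K * 2^i) hNi) ?_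
    have hr : ε⁻¹^4 * (2 / (K * 2^i : ℕ)) ≤ ((2:ℝ)^i)⁻¹ := by
      have hKr : ε⁻¹^4 * 2 ≤ K := by
        have := Nat.le_ceil (ε⁻¹^4 * 2)
        calc ε⁻¹^4 * 2 ≤ (⌈ε⁻¹^4 * 2⌉₊ : ℝ) := this
          _ ≤ K := by exact_mod_cast Nat.le_succ _
      have h2i : (0:ℝ) < 2^i := by positivity
      have hKpos : (0:ℝ) < K := by exact_mod_cast hK1
      rw [Nat.cast_mul, Nat.cast_pow, Nat.cast_ofNat]
      calc ε⁻¹^4 * (2 / ((K:ℝ) * 2^i)) = (ε⁻¹^4 * 2) / K * ((2:ℝ)^i)⁻¹ := by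
            field_simp
        _ ≤ 1 * ((2:ℝ)^i)⁻¹ := by
            refine mul_le_mul_of_nonneg_right ?_ (by positivity)
            rw [div_le_one hKpos]; exact hKr
        _ = ((2:ℝ)^i)⁻¹ := one_mul _
    calc ENNReal.ofReal (ε⁻¹^4 * (2 / (K * 2^i : ℕ)))
        ≤ ENNReal.ofReal (((2:ℝ)^i)⁻¹) := ENNReal.ofReal_le_ofReal hr
      _ = 1 / 2^i := by
          rw [ENNReal.ofReal_inv_of_pos (by positivity), one_div]
          congr 1
          rw [ENNReal.ofReal_pow (by norm_num)]
          norm_num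
  obtain ⟨i, hi⟩ := hX U ⟨hCE, hmeas⟩
  refine ⟨K * 2^i, Nat.one_le_iff_ne_zero.2 (by positivity), fun n hn => ?_⟩
  by_contra hcn
  rw [Bool.not_eq_false] at hcn
  apply hi
  have hmem : restr X n ∈ U i := ⟨by rw [length_restr]; exact hn, hcn⟩
  have hcyl : X ∈ cyl (restr X n) := by
    show restr X (restr X n).length = restr X n
    rw [length_restr]
  exact Set.mem_biUnion hmem hcyl


lemma rat_cast_eq (r : ℚ) (hr : 0 < r) : (r : ℝ) = (r.num.toNat : ℝ) / (r.den : ℝ) := by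
  rw [Rat.cast_def]
  congr 1
  exact_mod_cast (Int.toNat_of_nonneg (le_of_lt (Rat.num_pos.2 hr))).symm

lemma orth {p q : ℝ} (hp0 : 0 ≤ p) (hp1 : p ≤ 1) (hq0 : 0 ≤ q) (hq1 : q ≤ 1) (hlt : p < q)
    {μp μq : Measure Cantor} (hμp : BernoulliSpec p μp) (hμq : BernoulliSpec q μq)
    (X : Cantor) (h1 : MLRandom μp X) (h2 : MLRandom μq X) : False := by
  classical
  obtain ⟨r, hr1, hr2⟩ := exists_rat_btwn hlt
  obtain ⟨s, hs1, hs2⟩ := exists_rat_btwn hr2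
  have hrpos : (0:ℚ) < r := by exact_mod_cast lt_of_le_of_lt hp0 hr1
  have hspos : (0:ℚ) < s := by exact_mod_cast lt_of_le_of_lt hp0 (hr1.trans hs1)
  set a := r.num.toNat with ha
  set b := r.den with hb
  set a' := s.num.toNat with ha'
  set b' := s.den with hb'
  have hbpos : (0:ℝ) < b := by exact_mod_cast r.den_pos
  have hbpos' : (0:ℝ) < b' := by exact_mod_cast s.den_pos
  have hrcast : (r : ℝ) = (a : ℝ) / b := rat_cast_eq r hrpos
  have hscast : (s : ℝ) = (a' : ℝ) / b' := rat_cast_eq s hspos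
  set c1 : Str → Bool := fun σ => decide (a * σ.length ≤ b * myCount σ) with hc1def
  set c2 : Str → Bool := fun σ => decide (b' * myCount σ ≤ a' * σ.length) with hc2def
  have hc1 : Primrec c1 :=
    Primrec.nat_le.comp
      (Primrec.nat_mul.comp (Primrec.const a) Primrec.list_length)
      (Primrec.nat_mul.comp (Primrec.const b) primrec_myCount) |>.decide
  have hc2 : Primrec c2 :=
    Primrec.nat_le.comp
      (Primrec.nat_mul.comp (Primrec.const b') primrec_myCount)
      (Primrec.nat_mul.comp (Primrec.const a') Primrec.list_length) |>.decide
  have hε1 : (0:ℝ) < (r:ℝ) - p := by linarith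
  have hε2 : (0:ℝ) < q - (s:ℝ) := by linarith
  have hdev1 : ∀ σ : Str, c1 σ = true →
      ((r:ℝ) - p) * σ.length ≤ |(σ.count true : ℝ) - σ.length * p| := by
    intro σ hσ
    have h : a * σ.length ≤ b * myCount σ := of_decide_eq_true hσ
    rw [myCount_eq] at h
    have hR : (a:ℝ) * σ.length ≤ (b:ℝ) * σ.count true := by exact_mod_cast h
    have hcnt : (r:ℝ) * σ.length ≤ (σ.count true : ℝ) := by
      rw [hrcast, div_mul_eq_mul_div, div_le_iff₀ hbpos]
      linarith [hR]
    calc ((r:ℝ) - p) * σ.length = (r:ℝ) * σ.length - p * σ.length := by ring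
      _ ≤ (σ.count true : ℝ) - σ.length * p := by linarith
      _ ≤ |(σ.count true : ℝ) - σ.length * p| := le_abs_self _
  have hdev2 : ∀ σ : Str, c2 σ = true →
      (q - (s:ℝ)) * σ.length ≤ |(σ.count true : ℝ) - σ.length * q| := by
    intro σ hσ
    have h : b' * myCount σ ≤ a' * σ.length := of_decide_eq_true hσ
    rw [myCount_eq] at h
    have hR : (b':ℝ) * σ.count true ≤ (a':ℝ) * σ.length := by exact_mod_cast h
    have hcnt : (σ.count true : ℝ) ≤ (s:ℝ) * σ.length := by
      rw [hscast, div_mul_eq_mul_div, le_div_iff₀ hbpos']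
      linarith [hR]
    refine le_abs.2 (Or.inr ?_)
    calc (q - (s:ℝ)) * σ.length = q * σ.length - (s:ℝ) * σ.length := by ring
      _ ≤ -((σ.count true : ℝ) - σ.length * q) := by linarith
  obtain ⟨N1, hN1, hE1⟩ := escape hp0 hp1 hμp c1 hc1 hε1 hdev1 X h1
  obtain ⟨N2, hN2, hE2⟩ := escape hq0 hq1 hμq c2 hc2 hε2 hdev2 X h2
  set n := max N1 N2 with hn
  have hn1 : 1 ≤ n := le_trans hN1 (le_max_left _ _)
  have hf1 := hE1 n (le_max_left _ _)
  have hf2 := hE2 n (le_max_right _ _)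
  rw [hc1def] at hf1
  rw [hc2def] at hf2
  simp only [decide_eq_false_iff_not, length_restr, not_le] at hf1 hf2
  set cnt := myCount (restr X n) with hcnt
  -- hf1 : b * cnt < a * n ; hf2 : a' * n < b' * cnt
  have hR1 : (b:ℝ) * cnt < (a:ℝ) * n := by exact_mod_cast hf1
  have hR2 : (a':ℝ) * n < (b':ℝ) * cnt := by exact_mod_cast hf2
  have hlt1 : (cnt:ℝ) < (r:ℝ) * n := by
    rw [hrcast, div_mul_eq_mul_div, lt_div_iff₀ hbpos]
    linarith
  have hlt2 : (s:ℝ) * n < (cnt:ℝ) := by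
    rw [hscast, div_mul_eq_mul_div, div_lt_iff₀ hbpos']
    linarith
  have hrs : (r:ℝ) < (s:ℝ) := by exact_mod_cast hs1
  have hnpos : (0:ℝ) < n := by exact_mod_cast hn1
  nlinarith


end S6

/-- The Bernoulli measures are effectively orthogonal: for `p ≠ q` in `[0,1]` no real is
Martin-Löf random with respect to both Bernoulli(`p`) and Bernoulli(`q`). -/
theorem stmt6 (p q : ℝ) (hp : p ∈ Set.Icc (0 : ℝ) 1) (hq : q ∈ Set.Icc (0 : ℝ) 1)
    (hpq : p ≠ q) (μp μq : Measure Cantor)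
    (hμp : BernoulliSpec p μp) (hμq : BernoulliSpec q μq) :
    ∀ X : Cantor, ¬ (MLRandom μp X ∧ MLRandom μq X) := by
  intro X hX
  obtain ⟨hP, hQ⟩ := hX
  rcases lt_or_gt_of_ne hpq with h | h
  · exact S6.orth hp.1 hp.2 hq.1 hq.2 h hμp hμq X hP hQ
  · exact S6.orth hq.1 hq.2 hp.1 hp.2 h hμq hμp X hQ hP
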